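/- If A ⊂ B are subsets of P(X,S) with g(A) ⊆ X measurable for some g ∈ S, and f(B) ⊆ X is measurable for some f ∈ S, then f(A) ⊆ X and f(A) is measurable. -/

import Mathlib

def PQRel {X : Type*} (S : Set (X → X)) : (X × S) → (X × S) → Prop :=
  fun a b => (b.2 : X → X) a.1 = (a.2 : X → X) b.1

def IsAct {X : Type*} (S : Set (X → X)) (f : X → X)
    (F : Quot (PQRel S) → Quot (PQRel S)) : Prop :=
  ∀ (x : X) (g : S), F (Quot.mk (PQRel S) (x, g)) = Quot.mk (PQRel S) (f x, g)

def IsIota {X : Type*} (S : Set (X → X)) (ι : X → Quot (PQRel S)) : Prop :=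
  ∀ (x : X) (h : S), ι x = Quot.mk (PQRel S) ((h : X → X) x, h)

/-- if `A ⊆ B ⊆ P(X,S)`, `g(A) ⊆ X` is measurable for some `g ∈ S`,
and `f(B) ⊆ X` is measurable for some `f ∈ S`, then `f(A) ⊆ X` and `f(A)` is
measurable. -/
theorem lemma_subset_measurable {X : Type*} [MeasurableSpace X] (S : Set (X → X))
    (hinj : ∀ f ∈ S, Function.Injective f)
    (hcomp : ∀ f ∈ S, ∀ g ∈ S, f ∘ g ∈ S)
    (hcomm : ∀ f ∈ S, ∀ g ∈ S, f ∘ g = g ∘ f)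
    (hmeas : ∀ f ∈ S, Measurable f)
    (himg : ∀ f ∈ S, ∀ E : Set X, MeasurableSet E → MeasurableSet (f '' E))
    (ι : X → Quot (PQRel S)) (hι : IsIota S ι)
    (A B : Set (Quot (PQRel S))) (hAB : A ⊆ B)
    (g : X → X) (hg : g ∈ S) (Fg : Quot (PQRel S) → Quot (PQRel S))
    (hFg : IsAct S g Fg)
    (hgA : Fg '' A ⊆ Set.range ι) (hgAmeas : MeasurableSet (ι ⁻¹' (Fg '' A)))
    (f : X → X) (hf : f ∈ S) (Ff : Quot (PQRel S) → Quot (PQRel S))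
    (hFf : IsAct S f Ff)
    (hfB : Ff '' B ⊆ Set.range ι) (hfBmeas : MeasurableSet (ι ⁻¹' (Ff '' B))) :
    Ff '' A ⊆ Set.range ι ∧ MeasurableSet (ι ⁻¹' (Ff '' A)) := by
  -- pointwise commutativity
  have hc : ∀ u ∈ S, ∀ v ∈ S, ∀ x : X, u (v x) = v (u x) := by
    intro u hu v hv x
    exact congrFun (hcomm u hu v hv) x
  -- equal classes give the relation
  have hrel : ∀ a b : X × S, Quot.mk (PQRel S) a = Quot.mk (PQRel S) b →
      PQRel S a b := by
    intro a b h
    have h' := Quot.eqvGen_exact h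
    clear h
    induction h' with
    | rel x y h => exact h
    | refl x => rfl
    | symm x y _ ih => exact ih.symm
    | trans x y z _ _ ih1 ih2 =>
        -- ih1 : y.2 x.1 = x.2 y.1, ih2 : z.2 y.1 = y.2 z.1
        apply hinj (y.2 : X → X) y.2.2
        calc (y.2 : X → X) ((z.2 : X → X) x.1)
            = (z.2 : X → X) ((y.2 : X → X) x.1) := hc _ y.2.2 _ z.2.2 _
          _ = (z.2 : X → X) ((x.2 : X → X) y.1) := by rw [ih1]
          _ = (x.2 : X → X) ((z.2 : X → X) y.1) := hc _ z.2.2 _ x.2.2 _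
          _ = (x.2 : X → X) ((y.2 : X → X) z.1) := by rw [ih2]
          _ = (y.2 : X → X) ((x.2 : X → X) z.1) := hc _ x.2.2 _ y.2.2 _
  -- ι is injective
  have hιinj : Function.Injective ι := by
    intro x y h
    rw [hι x (⟨g, hg⟩ : S), hι y (⟨g, hg⟩ : S)] at h
    have h2 := hrel _ _ h
    simp only [PQRel] at h2
    exact hinj g hg (hinj g hg h2)
  -- Ff and Fg map ι to ι
  have hFfι : ∀ y : X, Ff (ι y) = ι (f y) := by
    intro y
    rw [hι y (⟨g, hg⟩ : S), hFf, hι (f y) (⟨g, hg⟩ : S)]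
    exact Quot.sound (congrArg g (hc f hf g hg y))
  have hFgι : ∀ y : X, Fg (ι y) = ι (g y) := by
    intro y
    rw [hι y (⟨g, hg⟩ : S), hFg, hι (g y) (⟨g, hg⟩ : S)]
  -- Fg injective
  have hFginj : Function.Injective Fg := by
    intro q q'
    induction q using Quot.ind with | _ a =>
    induction q' using Quot.ind with | _ b =>
    intro h
    rw [hFg a.1 a.2, hFg b.1 b.2] at h
    have h2 := hrel _ _ h
    simp only [PQRel] at h2
    apply Quot.sound
    show (b.2 : X → X) a.1 = (a.2 : X → X) b.1
    apply hinj g hg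
    rw [hc g hg _ b.2.2 a.1, hc g hg _ a.2.2 b.1]
    exact h2
  -- Ff and Fg commute
  have hcommF : ∀ q, Ff (Fg q) = Fg (Ff q) := by
    intro q
    induction q using Quot.ind with | _ a =>
    rw [hFg a.1 a.2, hFf a.1 a.2, hFf (g a.1) a.2, hFg (f a.1) a.2]
    exact Quot.sound ((show ((a.2:X→X)) (f (g a.1)) = (a.2:X→X) (g (f a.1)) from congrArg _ (hc f hf g hg a.1)))
  constructor
  · exact fun q hq => hfB (Set.image_mono (f := Ff) hAB hq)
  · have key : ι ⁻¹' (Ff '' A) = g ⁻¹' (f '' (ι ⁻¹' (Fg '' A))) := by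
      ext z
      simp only [Set.mem_preimage, Set.mem_image]
      constructor
      · rintro ⟨a, haA, ha⟩
        obtain ⟨y, hy⟩ := hgA ⟨a, haA, rfl⟩
        refine ⟨y, ⟨a, haA, hy.symm⟩, ?_⟩
        apply hιinj
        rw [← hFfι, hy, hcommF, ha, hFgι]
      · rintro ⟨y, ⟨a, haA, hy⟩, hfy⟩
        refine ⟨a, haA, ?_⟩
        apply hFginj
        rw [← hcommF, hy, hFfι, hfy, hFgι]
    rw [key]
    exact hmeas g hg (himg f hf _ hgAmeas)
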